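/- arXiv:1303.2331 — 2 statements merged into one kernel-verified Lean document; each statement's English description precedes it below -/
import Mathlib

section
/- For relatively prime integers p and q with q > 0, and for any integer p' with p·p' ≡ 1 (mod q), the quantity 12·s(p,q) − (p' + p)/q is an integer, where s(p,q) is the classical Dedekind sum. -/
open scoped BigOperators

/-- The `k`-th periodic Bernoulli function, as a function on `ℚ`. -/
noncomputable def periodicBernoulli (k : ℕ) (x : ℚ) : ℚ :=
  if x.den = 1 then (if k = 1 then 0 else bernoulli k)
  else (Polynomial.bernoulli k).eval (Int.fract x)

/-- The classical Dedekind sum `s(p,q) = ∑_{k=0}^{q-1} ((k/q))((pk/q))`. -/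
noncomputable def dedekindSum (p : ℤ) (q : ℕ) : ℚ :=
  ∑ k ∈ Finset.range q,
    periodicBernoulli 1 ((k : ℚ) / q) * periodicBernoulli 1 ((p * k : ℚ) / q)


lemma pb1_eval (x : ℚ) (hx : Int.fract x ≠ 0) :
    periodicBernoulli 1 x = Int.fract x - 1/2 := by
  have hden : x.den ≠ 1 := by
    intro h
    apply hx
    rw [← Rat.coe_int_num_of_den_eq_one h]
    exact Int.fract_intCast _
  rw [periodicBernoulli, if_neg hden]
  simp [Polynomial.bernoulli_def, Finset.sum_range_succ, bernoulli_one, bernoulli_zero]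
  ring

lemma pb1_zero (x : ℚ) (hx : x.den = 1) : periodicBernoulli 1 x = 0 := by
  rw [periodicBernoulli, if_pos hx, if_pos rfl]

lemma sum_sq_int (n : ℕ) : 6 * ∑ k ∈ Finset.range n, (k:ℤ)^2 = n*(n-1)*(2*n-1) := by
  induction n with
  | zero => simp
  | succ n ih =>
    rw [Finset.sum_range_succ]
    push_cast
    push_cast at ih
    ring_nf
    ring_nf at ih
    linarith

lemma bij_sum (p p' : ℤ) (q : ℕ) (hq : 0 < q)
    (hinv : p * p' ≡ 1 [ZMOD (q:ℤ)]) (g : ℤ → ℤ) :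
    ∑ k ∈ Finset.range q, g ((p * k) % (q:ℤ)) = ∑ k ∈ Finset.range q, g (k:ℤ) := by
  have hq' : (0:ℤ) < (q:ℤ) := by exact_mod_cast hq
  have hmem : ∀ (a : ℤ) (k : ℕ), k ∈ Finset.range q → ((a * k) % (q:ℤ)).toNat ∈ Finset.range q := by
    intro a k hk
    have h1 : 0 ≤ (a * k) % (q:ℤ) := Int.emod_nonneg _ (ne_of_gt hq')
    have h2 : (a * k) % (q:ℤ) < q := Int.emod_lt_of_pos _ hq'
    rw [Finset.mem_range]
    omega
  have hinvrec : ∀ (a b : ℤ), a * b ≡ 1 [ZMOD (q:ℤ)] → ∀ k : ℕ, k ∈ Finset.range q →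
      ((b * ↑((a * k) % (q:ℤ)).toNat) % (q:ℤ)).toNat = k := by
    intro a b hab k hk
    have hklt : k < q := Finset.mem_range.mp hk
    have h1 : 0 ≤ (a * k) % (q:ℤ) := Int.emod_nonneg _ (ne_of_gt hq')
    have h2 : (↑((a * k) % (q:ℤ)).toNat : ℤ) = (a * k) % (q:ℤ) := Int.toNat_of_nonneg h1
    rw [h2]
    have h3 : (b * ((a * k) % (q:ℤ))) % (q:ℤ) = (k:ℤ) % (q:ℤ) := by
      calc (b * ((a * k) % (q:ℤ))) % (q:ℤ) = (b * (a * k)) % (q:ℤ) := by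
            conv_rhs => rw [Int.mul_emod]
            rw [Int.mul_emod, Int.emod_emod_of_dvd _ dvd_rfl]
        _ = ((a * b) * k) % (q:ℤ) := by ring_nf
        _ = (1 * k) % (q:ℤ) := (Int.ModEq.mul_right (k:ℤ) hab)
        _ = (k:ℤ) % (q:ℤ) := by rw [one_mul]
    rw [h3, Int.emod_eq_of_lt (by positivity) (by exact_mod_cast hklt)]
    exact Int.toNat_natCast k
  refine Finset.sum_nbij' (i := fun k => ((p * k) % (q:ℤ)).toNat)
    (j := fun k => ((p' * k) % (q:ℤ)).toNat) (hmem p) (hmem p')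
    (hinvrec p p' hinv) (hinvrec p' p (by rwa [mul_comm] at hinv)) ?_
  intro k hk
  congr 1
  exact (Int.toNat_of_nonneg (Int.emod_nonneg _ (ne_of_gt hq'))).symm

theorem stmt1 (p p' : ℤ) (q : ℕ) (hq : 0 < q) (hco : Int.gcd p q = 1)
    (hinv : p * p' ≡ 1 [ZMOD (q : ℤ)]) :
    ∃ n : ℤ, 12 * dedekindSum p q - ((p' : ℚ) + p) / q = n := by
  have hq' : (0:ℤ) < (q:ℤ) := by exact_mod_cast hq
  have hqQ : (0:ℚ) < (q:ℚ) := by exact_mod_cast hq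
  have hq0 : (q:ℚ) ≠ 0 := ne_of_gt hqQ
  -- residues, quotients
  set r : ℕ → ℤ := fun k => (p * k) % (q:ℤ) with hr_def
  set f : ℕ → ℤ := fun k => (p * k) / (q:ℤ) with hf_def
  obtain ⟨c, hc⟩ : ∃ c, p * p' = 1 + (q:ℤ) * c := by
    obtain ⟨c, hc⟩ := (Int.ModEq.dvd hinv)
    exact ⟨-c, by linarith⟩
  have hr_nonneg : ∀ k, 0 ≤ r k := fun k => Int.emod_nonneg _ (ne_of_gt hq')
  have hr_lt : ∀ k, r k < q := fun k => Int.emod_lt_of_pos _ hq'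
  have hdiv : ∀ k : ℕ, p * k = (q:ℤ) * f k + r k := fun k => (Int.mul_ediv_add_emod _ _).symm
  have hm0 : ∀ k : ℕ, ∃ m, (k:ℤ) = p' * r k + (q:ℤ) * m := by
    intro k
    have h1 : r k ≡ p * k [ZMOD (q:ℤ)] := Int.emod_emod_of_dvd _ dvd_rfl
    have h2 : p' * r k ≡ p' * (p * k) [ZMOD (q:ℤ)] := h1.mul_left p'
    have h3 : p' * (p * k) ≡ (k:ℤ) [ZMOD (q:ℤ)] := by
      calc p' * (p * k) = (p * p') * k := by ring
        _ ≡ 1 * k [ZMOD (q:ℤ)] := Int.ModEq.mul_right (k:ℤ) hinv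
        _ = (k:ℤ) := one_mul _
    obtain ⟨m, hm⟩ := Int.ModEq.dvd (h2.trans h3)
    exact ⟨m, by linarith⟩
  choose m hm using hm0
  have hf_eq : ∀ k : ℕ, f k = c * r k + p * m k := by
    intro k
    have key : (q:ℤ) * f k = (q:ℤ) * (c * r k + p * m k) := by
      linear_combination -(hdiv k) + p * (hm k) + (r k) * hc
    exact mul_left_cancel₀ (ne_of_gt hq') key
  -- sums
  set S1 : ℤ := ∑ k ∈ Finset.range q, (k:ℤ) with hS1
  set S2 : ℤ := ∑ k ∈ Finset.range q, (k:ℤ)^2 with hS2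
  set U : ℤ := ∑ k ∈ Finset.range q, (k:ℤ) * r k with hU
  set T : ℤ := ∑ k ∈ Finset.range q, (k:ℤ) * f k with hT
  set M : ℤ := ∑ k ∈ Finset.range q, m k * r k with hM
  set Q2 : ℤ := ∑ k ∈ Finset.range q, (m k)^2 with hQ2
  have hSr : ∑ k ∈ Finset.range q, r k = S1 := bij_sum p p' q hq hinv id
  have hSr2 : ∑ k ∈ Finset.range q, (r k)^2 = S2 := bij_sum p p' q hq hinv (·^2)
  have hA : U = p * S2 - (q:ℤ) * T := by
    rw [hU, hS2, hT, Finset.mul_sum, Finset.mul_sum, ← Finset.sum_sub_distrib]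
    refine Finset.sum_congr rfl fun k _ => ?_
    linear_combination (-(k:ℤ)) * (hdiv k)
  have hB : U = p' * S2 + (q:ℤ) * M := by
    rw [hU, ← hSr2, hM, Finset.mul_sum, Finset.mul_sum, ← Finset.sum_add_distrib]
    refine Finset.sum_congr rfl fun k _ => ?_
    linear_combination (r k) * (hm k)
  have hC : T = c * p' * S2 + (1 + 2*(q:ℤ)*c) * M + p * (q:ℤ) * Q2 := by
    rw [hT, ← hSr2, hM, hQ2, Finset.mul_sum, Finset.mul_sum, Finset.mul_sum,
      ← Finset.sum_add_distrib, ← Finset.sum_add_distrib]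
    refine Finset.sum_congr rfl fun k _ => ?_
    calc (k:ℤ) * f k = (p' * r k + (q:ℤ) * m k) * (c * r k + p * m k) := by
          rw [← hm k, ← hf_eq k]
      _ = c * p' * (r k)^2 + (p * p' + (q:ℤ)*c) * (m k * r k) + p * (q:ℤ) * (m k)^2 := by ring
      _ = c * p' * (r k)^2 + (1 + 2*(q:ℤ)*c) * (m k * r k) + p * (q:ℤ) * (m k)^2 := by
          rw [hc]; ring
  have hD : 6 * S2 = (q:ℤ) * ((q:ℤ)-1) * (2*(q:ℤ)-1) := sum_sq_int q
  have hE : 2 * S1 = (q:ℤ) * ((q:ℤ)-1) := by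
    have h := congrArg (Nat.cast : ℕ → ℤ) (Finset.sum_range_id_mul_two q)
    push_cast [Nat.cast_sub hq] at h
    rw [hS1]
    push_cast
    linarith
  refine ⟨(p+p')*(2*(q:ℤ)-3) - c*p'*((q:ℤ)-1)*(2*(q:ℤ)-1) - 12*c*M - 6*p*Q2 - 3*((q:ℤ)-1), ?_⟩
  set n : ℤ := (p+p')*(2*(q:ℤ)-3) - c*p'*((q:ℤ)-1)*(2*(q:ℤ)-1) - 12*c*M - 6*p*Q2 - 3*((q:ℤ)-1) with hn
  have hZ : 12*U - 3*(q:ℤ)^2*((q:ℤ)-1) - (q:ℤ)*(p+p') = (q:ℤ)^2 * n := by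
    rw [hn]
    linear_combination 6*hA + 6*hB - 6*(q:ℤ)*hC + ((p+p') - (q:ℤ)*c*p')*hD
  -- rational side
  have hr_ne : ∀ k : ℕ, k < q → k ≠ 0 → r k ≠ 0 := by
    intro k hklt hk0 h0
    have hdvd : (q:ℤ) ∣ p * (k:ℤ) := Int.dvd_of_emod_eq_zero h0
    have hcop : IsCoprime (q:ℤ) p := by
      rw [Int.isCoprime_iff_gcd_eq_one, Int.gcd_comm]
      exact hco
    have hdk : (q:ℤ) ∣ (k:ℤ) := hcop.dvd_of_dvd_mul_left hdvd
    have hkpos : (0:ℤ) < (k:ℤ) := by exact_mod_cast Nat.pos_of_ne_zero hk0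
    have := Int.le_of_dvd hkpos hdk
    have : q ≤ k := by exact_mod_cast this
    omega
  have key_term : ∀ k ∈ Finset.range q,
      periodicBernoulli 1 ((k:ℚ)/q) * periodicBernoulli 1 ((p*k:ℚ)/q)
      = ((k:ℚ)*(r k : ℚ))/(q:ℚ)^2 - ((k:ℚ) + (r k : ℚ))/(2*(q:ℚ))
        + (if k = 0 then 0 else 1/4) := by
    intro k hk
    have hklt : k < q := Finset.mem_range.mp hk
    by_cases hk0 : k = 0
    · subst hk0
      have hr0 : r 0 = 0 := by simp [hr_def]
      have : ((0:ℕ):ℚ)/(q:ℚ) = 0 := by norm_num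
      simp [this, pb1_zero (0:ℚ) (by norm_num), hr0]
    · have hkpos : (0:ℚ) < (k:ℚ) := by exact_mod_cast Nat.pos_of_ne_zero hk0
      have hkltQ : (k:ℚ) < (q:ℚ) := by exact_mod_cast hklt
      have h1 : Int.fract ((k:ℚ)/q) = (k:ℚ)/q :=
        Int.fract_eq_self.mpr ⟨by positivity, by rw [div_lt_one hqQ]; exact hkltQ⟩
      have hrne := hr_ne k hklt hk0
      have hrpos : (0:ℚ) < (r k : ℚ) := by
        have := hr_nonneg k
        have : (0:ℤ) < r k := lt_of_le_of_ne this (Ne.symm hrne)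
        exact_mod_cast this
      have hrltQ : (r k : ℚ) < (q:ℚ) := by exact_mod_cast hr_lt k
      have h2 : ((p:ℚ)*(k:ℚ))/(q:ℚ) = ((f k : ℤ):ℚ) + (r k : ℚ)/(q:ℚ) := by
        have hcast : ((p:ℚ)*(k:ℚ)) = (q:ℚ) * (f k : ℚ) + (r k : ℚ) := by
          exact_mod_cast congrArg (Int.cast : ℤ → ℚ) (hdiv k)
        field_simp [hcast]
        linear_combination hcast
      have h3 : Int.fract ((p:ℚ)*(k:ℚ)/(q:ℚ)) = (r k : ℚ)/(q:ℚ) := by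
        rw [h2, Int.fract_intCast_add]
        exact Int.fract_eq_self.mpr ⟨by positivity, by rw [div_lt_one hqQ]; exact hrltQ⟩
      rw [pb1_eval _ (by rw [h1]; positivity), pb1_eval _ (by rw [h3]; positivity),
        h1, h3, if_neg hk0]
      field_simp
      ring
  have hsum : dedekindSum p q = (U:ℚ)/(q:ℚ)^2 - (S1:ℚ)/(q:ℚ) + ((q:ℚ)-1)/4 := by
    rw [dedekindSum, Finset.sum_congr rfl key_term, Finset.sum_add_distrib,
      Finset.sum_sub_distrib]
    have e1 : ∑ k ∈ Finset.range q, ((k:ℚ)*(r k : ℚ))/(q:ℚ)^2 = (U:ℚ)/(q:ℚ)^2 := by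
      rw [← Finset.sum_div, hU]
      push_cast
      rfl
    have e2 : ∑ k ∈ Finset.range q, ((k:ℚ) + (r k : ℚ))/(2*(q:ℚ)) = (S1:ℚ)/(q:ℚ) := by
      rw [← Finset.sum_div, Finset.sum_add_distrib]
      have c1 : ∑ k ∈ Finset.range q, (k:ℚ) = (S1:ℚ) := by rw [hS1]; push_cast; rfl
      have c2 : ∑ k ∈ Finset.range q, (r k : ℚ) = (S1:ℚ) := by
        rw [← hSr]; push_cast; rfl
      rw [c1, c2]
      field_simp
      ring
    have e3 : ∑ k ∈ Finset.range q, (if k = 0 then (0:ℚ) else 1/4) = ((q:ℚ)-1)/4 := by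
      have : ∀ k ∈ Finset.range q, (if k = 0 then (0:ℚ) else 1/4)
          = 1/4 - (if k = 0 then (1/4:ℚ) else 0) := by
        intro k _
        by_cases h : k = 0 <;> simp [h]
      rw [Finset.sum_congr rfl this, Finset.sum_sub_distrib, Finset.sum_const,
        Finset.sum_ite_eq' (Finset.range q) 0 (fun _ => (1/4:ℚ)),
        if_pos (Finset.mem_range.mpr hq), Finset.card_range]
      push_cast
      ring
    rw [e1, e2, e3]
  -- finish
  have hZQ : 12*(U:ℚ) - 3*(q:ℚ)^2*((q:ℚ)-1) - (q:ℚ)*((p:ℚ)+(p':ℚ)) = (q:ℚ)^2 * (n:ℚ) := by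
    exact_mod_cast congrArg (Int.cast : ℤ → ℚ) hZ
  have hEQ : 2*(S1:ℚ) = (q:ℚ)*((q:ℚ)-1) := by
    exact_mod_cast congrArg (Int.cast : ℤ → ℚ) hE
  have expand : (12*((U:ℚ)/(q:ℚ)^2 - (S1:ℚ)/(q:ℚ) + ((q:ℚ)-1)/4) - ((p':ℚ)+(p:ℚ))/(q:ℚ))
      = (12*(U:ℚ) - 12*(q:ℚ)*(S1:ℚ) + 3*(q:ℚ)^2*((q:ℚ)-1) - (q:ℚ)*((p':ℚ)+(p:ℚ)))/(q:ℚ)^2 := by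
    field_simp
    ring
  rw [hsum, expand, div_eq_iff (pow_ne_zero 2 hq0)]
  linear_combination hZQ - 6*(q:ℚ)*hEQ
end

section
/- For the 2-dimensional lattice cone σ generated by primitive vectors v₁ = (1,0) and v₂ = (p,q) with gcd(p,q) = 1 and q > 0, the Todd series satisfies Td_{pq}(x₁,x₂) = q·x₁·x₂ · Σ_{m ∈ ℤ² ∩ σ̌} exp(−⟨m,v₁⟩x₁ − ⟨m,v₂⟩x₂), where σ̌ is the dual cone {m : ⟨m,v₁⟩ ≥ 0, ⟨m,v₂⟩ ≥ 0} (as an identity of formal power series / convergent series for Re(x₁), Re(x₂) > 0). -/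
open scoped BigOperators

/-- `e(x) = exp(2πix)`. -/
noncomputable def eQ (x : ℚ) : ℂ := Complex.exp (2 * (Real.pi : ℂ) * Complex.I * (x : ℂ))

/-- The Todd series `Td_{pq}(x₁,x₂)` of the cone generated by `(1,0)` and `(p,q)`:
the quotient `Γ_σ = ℤ²/⟨(1,0),(p,q)⟩` is represented by `(0,t)`, `t = 0,…,q-1`, with
`χ₁ = e(-pt/q)` and `χ₂ = e(t/q)`. -/
noncomputable def toddSeries (p q : ℕ) (x₁ x₂ : ℂ) : ℂ :=
  ∑ t ∈ Finset.range q,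
    (x₁ / (1 - eQ (((-(p * t : ℤ) : ℤ) : ℚ) / q) * Complex.exp (-x₁))) *
    (x₂ / (1 - eQ ((t : ℚ) / q) * Complex.exp (-x₂)))


lemma eQ_pow (x : ℚ) (n : ℕ) : eQ x ^ n = eQ (n * x) := by
  unfold eQ
  rw [← Complex.exp_nat_mul]
  push_cast
  ring_nf

lemma eQ_int (n : ℤ) : eQ n = 1 := by
  unfold eQ
  rw [← Complex.exp_int_mul_two_pi_mul_I n]
  congr 1
  push_cast
  ring

lemma norm_eQ (x : ℚ) : ‖eQ x‖ = 1 := by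
  unfold eQ
  have h : 2 * (Real.pi : ℂ) * Complex.I * (x : ℂ) = ((2 * Real.pi * (x:ℚ) : ℝ) : ℂ) * Complex.I := by
    push_cast; ring
  rw [h, Complex.norm_exp_ofReal_mul_I]

lemma eQ_mul_eQ (x y : ℚ) : eQ x * eQ y = eQ (x + y) := by
  unfold eQ
  rw [← Complex.exp_add]
  congr 1
  push_cast
  ring

lemma char_sum (q : ℕ) (hq : 0 < q) (c : ℤ) :
    ∑ t ∈ Finset.range q, eQ ((t : ℚ) * (c : ℚ) / q) =
      if (q : ℤ) ∣ c then (q : ℂ) else 0 := by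
  have hq0 : (q : ℚ) ≠ 0 := by positivity
  by_cases h : (q : ℤ) ∣ c
  · obtain ⟨k, rfl⟩ := h
    rw [if_pos ⟨k, rfl⟩]
    rw [Finset.sum_congr rfl (fun t _ => ?_), Finset.sum_const, Finset.card_range,
      nsmul_eq_mul, mul_one]
    have : ((t : ℚ) * ((q * k : ℤ) : ℚ) / q) = ((t * k : ℤ) : ℚ) := by
      push_cast; field_simp
    rw [this, eQ_int]
  · rw [if_neg h]
    set ζ := eQ ((c : ℚ) / q) with hζ
    have hterm : ∀ t : ℕ, eQ ((t : ℚ) * (c : ℚ) / q) = ζ ^ t := by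
      intro t
      rw [hζ, eQ_pow]
      congr 1
      ring
    have hζq : ζ ^ q = 1 := by
      rw [hζ, eQ_pow]
      have : (q : ℚ) * ((c : ℚ) / q) = ((c : ℤ) : ℚ) := by field_simp
      rw [this, eQ_int]
    have hζ1 : ζ ≠ 1 := by
      intro h1
      apply h
      rw [hζ] at h1
      unfold eQ at h1
      rw [Complex.exp_eq_one_iff] at h1
      obtain ⟨n, hn⟩ := h1
      have h2πI : (2 : ℂ) * Real.pi * Complex.I ≠ 0 := by
        simp [Real.pi_ne_zero, Complex.I_ne_zero]
      have : (((c : ℚ) / q : ℚ) : ℂ) = (n : ℂ) := by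
        have h' : (2 : ℂ) * Real.pi * Complex.I * (((c : ℚ) / q : ℚ) : ℂ) =
            (2 : ℂ) * Real.pi * Complex.I * (n : ℂ) := by rw [hn]; ring
        exact mul_left_cancel₀ h2πI h'
      have hQ : ((c : ℚ) / q) = (n : ℚ) := by exact_mod_cast this
      refine ⟨n, ?_⟩
      have hc : (c : ℚ) = (q : ℚ) * n := by
        field_simp at hQ
        linarith [hQ]
      exact_mod_cast hc
    calc ∑ t ∈ Finset.range q, eQ ((t : ℚ) * (c : ℚ) / q)
        = ∑ t ∈ Finset.range q, ζ ^ t := Finset.sum_congr rfl fun t _ => hterm t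
      _ = (ζ ^ q - 1) / (ζ - 1) := geom_sum_eq hζ1 q
      _ = 0 := by rw [hζq]; simp

theorem stmt6 (p q : ℕ) (hq : 0 < q) (hco : Nat.Coprime p q) (x₁ x₂ : ℂ)
    (h₁ : 0 < x₁.re) (h₂ : 0 < x₂.re) :
    toddSeries p q x₁ x₂ =
      (q : ℂ) * x₁ * x₂ *
        ∑' m : {m : ℤ × ℤ // 0 ≤ m.1 ∧ 0 ≤ (p : ℤ) * m.1 + (q : ℤ) * m.2},
          Complex.exp (-((m.1.1 : ℂ)) * x₁ -
            (((p : ℤ) * m.1.1 + (q : ℤ) * m.1.2 : ℤ) : ℂ) * x₂) := by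
  classical
  set z₁ : ℕ → ℂ := fun t => eQ (((-(p * t : ℤ) : ℤ) : ℚ) / q) * Complex.exp (-x₁) with hz₁def
  set z₂ : ℕ → ℂ := fun t => eQ ((t : ℚ) / q) * Complex.exp (-x₂) with hz₂def
  have hex₁ : ‖Complex.exp (-x₁)‖ < 1 := by
    rw [Complex.norm_exp]
    rw [Real.exp_lt_one_iff]
    simpa using h₁
  have hex₂ : ‖Complex.exp (-x₂)‖ < 1 := by
    rw [Complex.norm_exp]
    rw [Real.exp_lt_one_iff]
    simpa using h₂
  have hn₁ : ∀ t, ‖z₁ t‖ < 1 := fun t => by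
    rw [hz₁def]; simp only [norm_mul, norm_eQ, one_mul]; exact hex₁
  have hn₂ : ∀ t, ‖z₂ t‖ < 1 := fun t => by
    rw [hz₂def]; simp only [norm_mul, norm_eQ, one_mul]; exact hex₂
  have hs₁ : ∀ t, Summable (fun a : ℕ => ‖z₁ t ^ a‖) := fun t => by
    simpa [norm_pow] using summable_geometric_of_lt_one (norm_nonneg _) (hn₁ t)
  have hs₂ : ∀ t, Summable (fun b : ℕ => ‖z₂ t ^ b‖) := fun t => by
    simpa [norm_pow] using summable_geometric_of_lt_one (norm_nonneg _) (hn₂ t)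
  -- Step 1: expand geometric series
  have step1 : toddSeries p q x₁ x₂ =
      x₁ * x₂ * ∑ t ∈ Finset.range q, ∑' ab : ℕ × ℕ, z₁ t ^ ab.1 * z₂ t ^ ab.2 := by
    rw [toddSeries, Finset.mul_sum]
    refine Finset.sum_congr rfl fun t _ => ?_
    have g1 : (∑' a : ℕ, z₁ t ^ a) = (1 - z₁ t)⁻¹ := tsum_geometric_of_norm_lt_one (hn₁ t)
    have g2 : (∑' b : ℕ, z₂ t ^ b) = (1 - z₂ t)⁻¹ := tsum_geometric_of_norm_lt_one (hn₂ t)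
    rw [← tsum_mul_tsum_of_summable_norm (hs₁ t) (hs₂ t), g1, g2]
    show x₁ / (1 - z₁ t) * (x₂ / (1 - z₂ t)) = x₁ * x₂ * ((1 - z₁ t)⁻¹ * (1 - z₂ t)⁻¹)
    ring
  -- Step 2: swap sums
  have step2 : ∑ t ∈ Finset.range q, ∑' ab : ℕ × ℕ, z₁ t ^ ab.1 * z₂ t ^ ab.2 =
      ∑' ab : ℕ × ℕ, ∑ t ∈ Finset.range q, z₁ t ^ ab.1 * z₂ t ^ ab.2 :=
    (Summable.tsum_finsetSum fun t _ => summable_mul_of_summable_norm (hs₁ t) (hs₂ t)).symm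
  -- Step 3: character sum evaluation
  have step3 : ∀ ab : ℕ × ℕ, ∑ t ∈ Finset.range q, z₁ t ^ ab.1 * z₂ t ^ ab.2 =
      (if (q : ℤ) ∣ ((ab.2 : ℤ) - (p : ℤ) * ab.1) then (q : ℂ) else 0) *
        Complex.exp (-(ab.1 : ℂ) * x₁ - (ab.2 : ℂ) * x₂) := by
    intro ⟨a, b⟩
    have hq0 : (q : ℚ) ≠ 0 := by positivity
    have hE : Complex.exp (-x₁) ^ a * Complex.exp (-x₂) ^ b =
        Complex.exp (-(a : ℂ) * x₁ - (b : ℂ) * x₂) := by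
      rw [← Complex.exp_nat_mul, ← Complex.exp_nat_mul, ← Complex.exp_add]
      ring_nf
    have hterm : ∀ t : ℕ, z₁ t ^ a * z₂ t ^ b =
        eQ ((t : ℚ) * (((b : ℤ) - (p : ℤ) * a : ℤ) : ℚ) / q) *
          Complex.exp (-(a : ℂ) * x₁ - (b : ℂ) * x₂) := by
      intro t
      rw [hz₁def, hz₂def]
      simp only [mul_pow]
      rw [eQ_pow, eQ_pow]
      have : eQ ((a : ℚ) * (((-(p * t : ℤ) : ℤ) : ℚ) / q)) * Complex.exp (-x₁) ^ a *
          (eQ ((b : ℚ) * ((t : ℚ) / q)) * Complex.exp (-x₂) ^ b) =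
          (eQ ((a : ℚ) * (((-(p * t : ℤ) : ℤ) : ℚ) / q)) * eQ ((b : ℚ) * ((t : ℚ) / q))) *
          (Complex.exp (-x₁) ^ a * Complex.exp (-x₂) ^ b) := by ring
      rw [this, eQ_mul_eQ, hE]
      congr 2
      push_cast
      field_simp
      ring
    rw [Finset.sum_congr rfl fun t _ => hterm t, ← Finset.sum_mul,
      char_sum q hq ((b : ℤ) - (p : ℤ) * a)]
  -- Step 4: restrict to the support
  have hqZ : (q : ℤ) ≠ 0 := by exact_mod_cast hq.ne'
  set S : Set (ℕ × ℕ) := {ab | (q : ℤ) ∣ ((ab.2 : ℤ) - (p : ℤ) * ab.1)} with hSdef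
  have key : ∀ x : S, (p : ℤ) * (x.1.1 : ℤ) + (q : ℤ) * (((x.1.2 : ℤ) - (p : ℤ) * x.1.1) / q)
      = (x.1.2 : ℤ) := fun x => by
    rw [Int.mul_ediv_cancel' x.2]; ring
  have h4 : ∑' ab : ℕ × ℕ,
      ((if (q : ℤ) ∣ ((ab.2 : ℤ) - (p : ℤ) * ab.1) then (q : ℂ) else 0) *
        Complex.exp (-(ab.1 : ℂ) * x₁ - (ab.2 : ℂ) * x₂)) =
      (q : ℂ) * ∑' x : S, Complex.exp (-(x.1.1 : ℂ) * x₁ - (x.1.2 : ℂ) * x₂) := by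
    have hsupp : Function.support (fun ab : ℕ × ℕ =>
        (if (q : ℤ) ∣ ((ab.2 : ℤ) - (p : ℤ) * ab.1) then (q : ℂ) else 0) *
          Complex.exp (-(ab.1 : ℂ) * x₁ - (ab.2 : ℂ) * x₂)) ⊆ S := by
      intro ab hab
      by_contra h
      simp only [hSdef, Set.mem_setOf_eq] at h
      exact hab (by simp only [if_neg h, zero_mul])
    rw [← tsum_subtype_eq_of_support_subset hsupp, ← tsum_mul_left]
    refine tsum_congr fun x => ?_
    have hx := x.2
    simp only [hSdef, Set.mem_setOf_eq] at hx
    rw [if_pos hx]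
  -- Step 5: reindex by the bijection
  let φ : S → {m : ℤ × ℤ // 0 ≤ m.1 ∧ 0 ≤ (p : ℤ) * m.1 + (q : ℤ) * m.2} := fun x =>
    ⟨((x.1.1 : ℤ), ((x.1.2 : ℤ) - (p : ℤ) * x.1.1) / q),
     ⟨Int.ofNat_nonneg _, by rw [key x]; exact Int.ofNat_nonneg _⟩⟩
  have hinj : Function.Injective φ := by
    intro x y hxy
    have h1 : (x.1.1 : ℤ) = (y.1.1 : ℤ) := congrArg (fun m => m.1.1) hxy
    have h2 : ((x.1.2 : ℤ) - (p : ℤ) * x.1.1) / q = ((y.1.2 : ℤ) - (p : ℤ) * y.1.1) / q :=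
      congrArg (fun m => m.1.2) hxy
    have hb : (x.1.2 : ℤ) = (y.1.2 : ℤ) := by rw [← key x, ← key y, h2, h1]
    exact Subtype.ext (Prod.ext (by exact_mod_cast h1) (by exact_mod_cast hb))
  have hsurj : Function.Surjective φ := by
    intro m
    refine ⟨⟨(m.1.1.toNat, ((p : ℤ) * m.1.1 + (q : ℤ) * m.1.2).toNat), ?_⟩, ?_⟩
    · show (q : ℤ) ∣ (((((p : ℤ) * m.1.1 + (q : ℤ) * m.1.2).toNat : ℤ)) -
        (p : ℤ) * (m.1.1.toNat : ℤ))
      rw [Int.toNat_of_nonneg m.2.2, Int.toNat_of_nonneg m.2.1]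
      exact ⟨m.1.2, by ring⟩
    · apply Subtype.ext
      apply Prod.ext
      · show ((m.1.1.toNat : ℤ)) = m.1.1
        exact Int.toNat_of_nonneg m.2.1
      · show (((((p : ℤ) * m.1.1 + (q : ℤ) * m.1.2).toNat : ℤ)) -
            (p : ℤ) * (m.1.1.toNat : ℤ)) / q = m.1.2
        rw [Int.toNat_of_nonneg m.2.2, Int.toNat_of_nonneg m.2.1]
        have hc : (p : ℤ) * m.1.1 + (q : ℤ) * m.1.2 - (p : ℤ) * m.1.1 = (q : ℤ) * m.1.2 := by
          ring
        rw [hc, Int.mul_ediv_cancel_left _ hqZ]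
  have h6 : ∑' x : S, Complex.exp (-(x.1.1 : ℂ) * x₁ - (x.1.2 : ℂ) * x₂) =
      ∑' m : {m : ℤ × ℤ // 0 ≤ m.1 ∧ 0 ≤ (p : ℤ) * m.1 + (q : ℤ) * m.2},
        Complex.exp (-((m.1.1 : ℂ)) * x₁ -
          (((p : ℤ) * m.1.1 + (q : ℤ) * m.1.2 : ℤ) : ℂ) * x₂) := by
    rw [← Equiv.tsum_eq (Equiv.ofBijective φ ⟨hinj, hsurj⟩)]
    refine tsum_congr fun x => ?_
    show Complex.exp (-(x.1.1 : ℂ) * x₁ - (x.1.2 : ℂ) * x₂) =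
      Complex.exp (-(((φ x).1.1 : ℤ) : ℂ) * x₁ -
        (((p : ℤ) * (φ x).1.1 + (q : ℤ) * (φ x).1.2 : ℤ) : ℂ) * x₂)
    rw [key x]
    have ha : ((φ x).1.1 : ℤ) = (x.1.1 : ℤ) := rfl
    rw [ha]
    push_cast
    ring_nf
  rw [step1, step2, tsum_congr step3, h4, h6]
  ring
end
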